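/- arXiv:0707.1660 — 3 statements merged into one kernel-verified Lean document; each statement's English description precedes it below -/
import Mathlib

section
/- For all nonnegative integers n and all integers k, one has C_μ(2n+1, k-1) + C_μ(2n+1, k) = (1 + 2μ·θ(k)/(n+1))·C_μ(2n+2, k), where θ(k) is 1 if k is odd and 0 otherwise (μ-deformed Pascal identity for odd upper index). -/
open Finset

/-- The μ-deformed factorial function γ_μ. -/
noncomputable def gammaMu (μ : ℝ) : ℕ → ℝ
  | 0 => 1
  | n + 1 => ((n + 1 : ℝ) + 2 * μ * (if Odd (n + 1) then 1 else 0)) * gammaMu μ n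

/-- The μ-deformed binomial coefficient C_μ(n,k), zero outside 0 ≤ k ≤ n. -/
noncomputable def binomMu (μ : ℝ) (n : ℕ) (k : ℤ) : ℝ :=
  if 0 ≤ k ∧ k ≤ (n : ℤ) then gammaMu μ n / (gammaMu μ (n - k.toNat) * gammaMu μ k.toNat) else 0

/-- The n-th μ-deformed binomial polynomial p_{n,μ}(x,y). -/
noncomputable def pMu (μ : ℝ) (n : ℕ) (x y : ℂ) : ℂ :=
  ∑ k ∈ Finset.range (n + 1), (binomMu μ n k : ℂ) * x ^ k * y ^ (n - k)

/-- The μ-deformed exponential function. -/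
noncomputable def expMu (μ : ℝ) (z : ℂ) : ℂ :=
  ∑' n : ℕ, z ^ n / (gammaMu μ n : ℂ)

/-- The Bessel function of the first kind of order ν, for positive real argument. -/
noncomputable def besselJ (ν x : ℝ) : ℝ :=
  ∑' m : ℕ, ((-1) ^ m / (Nat.factorial m * Real.Gamma (ν + m + 1))) * (x / 2) ^ ((2 * m : ℝ) + ν)

lemma gammaMu_pos (μ : ℝ) (hμ : -(1/2 : ℝ) < μ) : ∀ m, 0 < gammaMu μ m := by
  intro m
  induction m with
  | zero => norm_num [gammaMu]
  | succ n ih =>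
    rw [gammaMu]
    refine mul_pos ?_ ih
    split
    · nlinarith [Nat.cast_nonneg (α := ℝ) n]
    · nlinarith [Nat.cast_nonneg (α := ℝ) n]

lemma gammaMu_zero (μ : ℝ) : gammaMu μ 0 = 1 := rfl

lemma binomMu_natCast (μ : ℝ) (n j : ℕ) (h : j ≤ n) :
    binomMu μ n (j : ℤ) = gammaMu μ n / (gammaMu μ (n - j) * gammaMu μ j) := by
  rw [binomMu, if_pos ⟨Int.natCast_nonneg j, by exact_mod_cast h⟩, Int.toNat_natCast]

lemma binomMu_zero_of_gt (μ : ℝ) (n j : ℕ) (h : n < j) : binomMu μ n (j : ℤ) = 0 := by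
  rw [binomMu, if_neg]
  rintro ⟨-, h2⟩
  exact absurd (by exact_mod_cast h2) (not_le.2 h)

lemma binomMu_zero_of_neg (μ : ℝ) (n : ℕ) (k : ℤ) (h : k < 0) : binomMu μ n k = 0 := by
  rw [binomMu, if_neg]
  rintro ⟨h1, -⟩
  omega

theorem binomMu_pascal_odd (μ : ℝ) (hμ : -(1/2 : ℝ) < μ) (n : ℕ) (k : ℤ) :
    binomMu μ (2 * n + 1) (k - 1) + binomMu μ (2 * n + 1) k =
      (1 + 2 * μ * (if Odd k then 1 else 0) / (n + 1)) * binomMu μ (2 * n + 2) k := by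
  have hpos := gammaMu_pos μ hμ
  have hn1 : (0:ℝ) < (n:ℝ) + 1 := by positivity
  rcases lt_or_ge k 0 with hk | hk
  · rw [binomMu_zero_of_neg μ _ _ (by omega), binomMu_zero_of_neg μ _ _ hk,
        binomMu_zero_of_neg μ _ _ hk]
    ring
  lift k to ℕ using hk with j
  rcases j with _ | i
  · -- j = 0
    have h1 : ((0:ℕ):ℤ) - 1 = -1 := by norm_num
    rw [h1, binomMu_zero_of_neg μ _ _ (by omega), binomMu_natCast μ _ 0 (by omega),
        binomMu_natCast μ _ 0 (by omega), Nat.sub_zero, Nat.sub_zero, gammaMu_zero,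
        mul_one, mul_one, div_self (ne_of_gt (hpos _)), div_self (ne_of_gt (hpos _))]
    norm_num
  rcases lt_or_ge (2*n+1) (i+1) with hbig | hle
  · rcases eq_or_lt_of_le (show 2*n+2 ≤ i+1 by omega) with heq | hgt
    · -- i+1 = 2n+2
      have hi : i = 2*n+1 := by omega
      subst hi
      have h1 : ((2*n+1+1:ℕ):ℤ) - 1 = ((2*n+1:ℕ):ℤ) := by push_cast; ring
      rw [h1, binomMu_natCast μ _ _ (le_refl _), binomMu_zero_of_gt μ _ _ (by omega),
          binomMu_natCast μ _ _ (by omega)]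
      have hodd : ¬ Odd ((2*n+1+1:ℕ):ℤ) := by
        rw [Int.odd_coe_nat, Nat.odd_iff]; omega
      rw [if_neg hodd, Nat.sub_self]
      have e : 2*n+2 - (2*n+1+1) = 0 := by omega
      rw [e, gammaMu_zero, one_mul, one_mul, div_self (ne_of_gt (hpos _)),
          div_self (ne_of_gt (hpos _))]
      norm_num
    · rw [binomMu_zero_of_gt μ _ _ (by omega), binomMu_zero_of_gt μ _ _ (by omega)]
      have h1 : ((i+1:ℕ):ℤ) - 1 = ((i:ℕ):ℤ) := by push_cast; ring
      rw [h1, binomMu_zero_of_gt μ _ _ (by omega)]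
      ring
  · -- main case: 1 ≤ i+1 ≤ 2n+1
    obtain ⟨m, him⟩ : ∃ m, i + m = 2*n := ⟨2*n - i, by omega⟩
    have h1 : ((i+1:ℕ):ℤ) - 1 = ((i:ℕ):ℤ) := by push_cast; ring
    rw [h1, binomMu_natCast μ _ _ (by omega), binomMu_natCast μ _ _ (by omega),
        binomMu_natCast μ _ _ (by omega)]
    have e1 : 2*n+1 - i = m+1 := by omega
    have e2 : 2*n+1 - (i+1) = m := by omega
    have e3 : 2*n+2 - (i+1) = m+1 := by omega
    rw [e1, e2, e3]
    set c : ℝ := if Odd (i+1) then (1:ℝ) else 0 with hc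
    have hck : (if Odd ((i+1:ℕ):ℤ) then (1:ℝ) else 0) = c := by
      rw [hc]
      exact if_congr (by rw [Int.odd_coe_nat]) rfl rfl
    have hA : gammaMu μ (i+1) = ((i:ℝ)+1 + 2*μ*c) * gammaMu μ i := by
      rw [gammaMu]
    have hB : gammaMu μ (m+1) = ((m:ℝ)+1 + 2*μ*c) * gammaMu μ m := by
      have h2 : (if Odd (m+1) then (1:ℝ) else 0) = c := by
        rw [hc]
        exact if_congr (by rw [Nat.odd_iff, Nat.odd_iff]; omega) rfl rfl
      rw [gammaMu, h2]
    have hC : gammaMu μ (2*n+2) = ((2*n:ℝ)+2) * gammaMu μ (2*n+1) := by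
      show gammaMu μ ((2*n+1)+1) = _
      rw [gammaMu]
      have h3 : ¬ Odd (2*n+1+1) := by rw [Nat.odd_iff]; omega
      rw [if_neg h3]; push_cast; ring
    rw [hck, hA, hB, hC]
    have hmr : (m:ℝ) = 2*(n:ℝ) - i := by
      have : (i:ℝ) + m = 2*n := by exact_mod_cast him
      linarith
    have hgi := hpos i
    have hgm := hpos m
    have hg21 := hpos (2*n+1)
    have hcc : c = 1 ∨ c = 0 := by rw [hc]; split <;> simp
    have hd1 : ((i:ℝ)+1 + 2*μ*c) > 0 := by
      rcases hcc with h | h <;> rw [h] <;> nlinarith [Nat.cast_nonneg (α := ℝ) i]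
    have hd2 : ((m:ℝ)+1 + 2*μ*c) > 0 := by
      rcases hcc with h | h <;> rw [h] <;> nlinarith [Nat.cast_nonneg (α := ℝ) m]
    rw [hmr] at hd2 ⊢
    generalize gammaMu μ i = gi at hgi ⊢
    generalize gammaMu μ m = gm at hgm ⊢
    generalize gammaMu μ (2*n+1) = g at hg21 ⊢
    field_simp
    ring
end

section
/- For every integer n ≥ 1, p_{4n-2,μ}(1,-1) = μ · 2^{2n-1} · (Π_{k=n+1}^{2n-1} (μ+k-1)) / (Π_{k=1}^{n} (μ+k-1/2)). -/
open Finset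

/-! ### Auxiliary: rising factorial (Pochhammer) on ℝ -/

noncomputable def poch (a : ℝ) (n : ℕ) : ℝ := ∏ j ∈ Finset.range n, (a + j)

lemma poch_zero (a : ℝ) : poch a 0 = 1 := by simp [poch]

lemma poch_succ_right (a : ℝ) (n : ℕ) : poch a (n+1) = poch a n * (a + n) := by
  simp [poch, Finset.prod_range_succ]

lemma poch_succ_left (a : ℝ) (n : ℕ) : poch a (n+1) = a * poch (a+1) n := by
  rw [poch, Finset.prod_range_succ']
  rw [show (∏ j ∈ Finset.range n, (a + ↑(j+1))) = poch (a+1) n from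
    Finset.prod_congr rfl fun j _ => by push_cast [poch]; ring]
  simp [mul_comm]

lemma poch_add (a : ℝ) (m n : ℕ) : poch a (m+n) = poch a m * poch (a+m) n := by
  induction n with
  | zero => simp [poch]
  | succ n ih =>
    rw [← Nat.add_assoc, poch_succ_right, ih, poch_succ_right]
    push_cast; ring

lemma poch_pos {a : ℝ} (ha : 0 < a) (n : ℕ) : 0 < poch a n :=
  Finset.prod_pos fun j _ => by positivity

lemma sum_pascal (f : ℕ → ℝ) (s : ℕ) :
    ∑ i ∈ Finset.range (s+1+1), ((s+1).choose i : ℝ) * f i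
    = ∑ i ∈ Finset.range (s+1), (s.choose i : ℝ) * (f (i+1) + f i) := by
  have h1 := Finset.sum_range_succ' (fun i => ((s+1).choose i : ℝ) * f i) (s+1)
  have h2 := Finset.sum_range_succ' (fun i => ((s).choose i : ℝ) * f i) (s+1)
  have h3 := Finset.sum_range_succ (fun i => ((s).choose i : ℝ) * f i) (s+1)
  simp only [Nat.choose_succ_succ, Nat.cast_add, add_mul, Finset.sum_add_distrib,
    Nat.choose_zero_right, Nat.cast_one, one_mul, Nat.choose_succ_self, Nat.cast_zero,
    zero_mul, add_zero, mul_add] at h1 h2 h3 ⊢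
  rw [h1, h2] at *
  linarith [h3]

lemma key (s : ℕ) : ∀ a : ℝ,
    ∑ i ∈ Finset.range (s+1),
      (s.choose i : ℝ) * (poch (a + s - i) i * poch (a + i) (s - i))
      = poch (2*a + s - 1) s := by
  induction s with
  | zero => intro a; simp [poch]
  | succ s ih =>
    intro a
    push_cast
    rw [sum_pascal (fun x => poch (a + ((s:ℝ) + 1) - ↑x) x * poch (a + ↑x) (s + 1 - x)) s]
    have step2 : ∀ i ∈ Finset.range (s+1),
        (s.choose i : ℝ) *
          ((poch (a + ((s:ℝ)+1) - ↑(i+1)) (i+1) * poch (a + ↑(i+1)) (s+1 - (i+1)))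
           + (poch (a + ((s:ℝ)+1) - ↑i) i * poch (a + ↑i) (s+1 - i)))
        = (2*a + s) * ((s.choose i : ℝ) *
            (poch ((a+1) + s - i) i * poch ((a+1) + i) (s - i))) := by
      intro i hi
      have his : i ≤ s := Nat.lt_succ_iff.mp (Finset.mem_range.mp hi)
      have e1 : s + 1 - (i+1) = s - i := by omega
      have e2 : s + 1 - i = (s - i) + 1 := by omega
      have h1 : poch (a + ((s:ℝ)+1) - ↑(i+1)) (i+1)
          = (a + s - i) * poch ((a+1) + s - i) i := by
        rw [show (a + ((s:ℝ)+1) - ↑(i+1)) = a + (s:ℝ) - i by push_cast; ring,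
          poch_succ_left, show (a + (s:ℝ) - ↑i + 1) = (a+1) + s - i by ring]
      have h2 : poch (a + ↑i) ((s-i) + 1) = (a + i) * poch ((a+1) + i) (s - i) := by
        rw [poch_succ_left, show (a + (i:ℝ) + 1) = (a+1) + i by ring]
      have h3 : (a + (↑(i+1)) : ℝ) = (a+1) + i := by push_cast; ring
      rw [e1, e2, h1, h2, h3,
        show (a + ((s:ℝ)+1) - ↑i) = (a+1) + s - i by ring]
      ring
    rw [Finset.sum_congr rfl step2, ← Finset.mul_sum, ih (a+1)]
    rw [show (2*a + ((s:ℝ)+1) - 1) = 2*a + s by ring, poch_succ_left,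
      show (2*a + (s:ℝ) + 1) = 2*(a+1) + s - 1 by ring]

lemma conv_sum (b : ℝ) (hb : 0 < b) (t : ℕ) :
    ∑ i ∈ Finset.range (t+1),
      (t.choose i : ℝ) * poch b t / (poch b (t-i) * poch b i)
    = poch (2*b + t - 1) t / poch b t := by
  rw [← key t b, Finset.sum_div]
  refine Finset.sum_congr rfl fun i hi => ?_
  have hit : i ≤ t := Nat.lt_succ_iff.mp (Finset.mem_range.mp hi)
  have h1 : poch b t = poch b (t-i) * poch (b + t - i) i := by
    rw [show (b + (t:ℝ) - i) = b + ((t-i : ℕ) : ℝ) by rw [Nat.cast_sub hit]; ring,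
      ← poch_add]
    congr 1
    omega
  have h2 : poch b t = poch b i * poch (b + i) (t-i) := by
    rw [← poch_add]
    congr 1
    omega
  have p1 : (0:ℝ) < poch b (t-i) := poch_pos hb _
  have p2 : (0:ℝ) < poch b i := poch_pos hb _
  have p3 : (0:ℝ) < poch b t := poch_pos hb _
  rw [div_eq_div_iff (by positivity) (ne_of_gt p3)]
  linear_combination (↑(t.choose i) : ℝ) * poch b t * h1
    + (↑(t.choose i) : ℝ) * (poch b (t-i) * poch (b + ↑t - ↑i) i) * h2

lemma poch_mul_succ (a : ℝ) (j : ℕ) : poch a j * (a + j) = a * poch (a+1) j := by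
  rw [← poch_succ_right, poch_succ_left]

lemma gammaMu_odd (μ : ℝ) (k : ℕ) :
    gammaMu μ (2*k+1) = 2*(μ + 1/2 + k) * gammaMu μ (2*k) := by
  rw [show (2*k+1) = (2*k)+1 from rfl, gammaMu,
    if_pos (Nat.odd_iff.mpr (by omega))]
  push_cast; ring

lemma gammaMu_even (μ : ℝ) (k : ℕ) :
    gammaMu μ (2*k) = 4^k * (k.factorial : ℝ) * poch (μ+1/2) k := by
  induction k with
  | zero => simp [gammaMu, poch]
  | succ k ih =>
    have hodd : ¬ Odd (2*k+1+1) := by rw [Nat.odd_iff]; omega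
    rw [show 2*(k+1) = (2*k+1)+1 by ring, gammaMu, if_neg hodd, gammaMu_odd, ih,
      poch_succ_right]
    push_cast [Nat.factorial_succ]
    ring

lemma binomMu_eq (μ : ℝ) (m k : ℕ) (hk : k ≤ m) :
    binomMu μ m ((k : ℤ)) = gammaMu μ m / (gammaMu μ (m-k) * gammaMu μ k) := by
  rw [binomMu, if_pos ⟨Int.ofNat_nonneg k, by exact_mod_cast hk⟩, Int.toNat_natCast]

lemma sum_split (f : ℕ → ℝ) (s : ℕ) :
    ∑ k ∈ Finset.range (2*s+1), f k
    = ∑ i ∈ Finset.range (s+1), f (2*i) + ∑ i ∈ Finset.range s, f (2*i+1) := by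
  induction s with
  | zero => simp
  | succ s ih =>
    rw [show 2*(s+1)+1 = (2*s+1)+1+1 by ring, Finset.sum_range_succ, Finset.sum_range_succ,
      ih, Finset.sum_range_succ (fun i => f (2*i)) (s+1),
      Finset.sum_range_succ (fun i => f (2*i+1)) s,
      show 2*s+1+1 = 2*(s+1) by ring]
    ring

lemma even_term (μ : ℝ) (hμ : -(1/2:ℝ) < μ) (s i : ℕ) (hi : i ≤ s) :
    binomMu μ (2*s) ((2*i : ℕ) : ℤ)
    = (s.choose i : ℝ) * poch (μ+1/2) s / (poch (μ+1/2) (s-i) * poch (μ+1/2) i) := by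
  have ha : 0 < μ + 1/2 := by linarith
  rw [binomMu_eq μ (2*s) (2*i) (by omega), show 2*s - 2*i = 2*(s-i) by omega,
    gammaMu_even, gammaMu_even, gammaMu_even]
  have h4 : (4:ℝ)^s = 4^(s-i) * 4^i := by rw [← pow_add]; congr 1; omega
  have hch : ((s.choose i : ℝ)) * (i.factorial : ℝ) * ((s-i).factorial : ℝ)
      = (s.factorial : ℝ) := by exact_mod_cast Nat.choose_mul_factorial_mul_factorial hi
  have p1 : (0:ℝ) < poch (μ+1/2) (s-i) := poch_pos ha _
  have p2 : (0:ℝ) < poch (μ+1/2) i := poch_pos ha _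
  have f1 : (0:ℝ) < ((s-i).factorial : ℝ) := by exact_mod_cast (s-i).factorial_pos
  have f2 : (0:ℝ) < ((i).factorial : ℝ) := by exact_mod_cast (i).factorial_pos
  rw [div_eq_div_iff (by positivity) (by positivity), h4, ← hch]
  ring

lemma odd_term (μ : ℝ) (hμ : -(1/2:ℝ) < μ) (t i : ℕ) (hi : i ≤ t) :
    binomMu μ (2*(t+1)) ((2*i+1 : ℕ) : ℤ)
    = ((t:ℝ)+1) * ((t.choose i : ℝ)) * poch (μ+1/2+1) t /
        ((μ+1/2) * (poch (μ+1/2+1) (t-i) * poch (μ+1/2+1) i)) := by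
  have ha : 0 < μ + 1/2 := by linarith
  have hb : 0 < μ + 1/2 + 1 := by linarith
  rw [binomMu_eq μ (2*(t+1)) (2*i+1) (by omega),
    show 2*(t+1) - (2*i+1) = 2*(t-i)+1 by omega,
    gammaMu_odd, gammaMu_odd, gammaMu_even, gammaMu_even, gammaMu_even]
  have h4 : (4:ℝ)^(t+1) = 4^(t-i) * 4^i * 4 := by rw [← pow_add, ← pow_succ]; congr 1; omega
  have hch : ((t.choose i : ℝ)) * (i.factorial : ℝ) * ((t-i).factorial : ℝ)
      = (t.factorial : ℝ) := by exact_mod_cast Nat.choose_mul_factorial_mul_factorial hi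
  have r1 : poch (μ+1/2) (t+1) = (μ+1/2) * poch (μ+1/2+1) t := poch_succ_left _ _
  have r2 := poch_mul_succ (μ+1/2) (t-i)
  have r3 := poch_mul_succ (μ+1/2) i
  have p1 : (0:ℝ) < poch (μ+1/2) (t-i) := poch_pos ha _
  have p2 : (0:ℝ) < poch (μ+1/2) i := poch_pos ha _
  have q1 : (0:ℝ) < poch (μ+1/2+1) (t-i) := poch_pos hb _
  have q2 : (0:ℝ) < poch (μ+1/2+1) i := poch_pos hb _
  have f1 : (0:ℝ) < ((t-i).factorial : ℝ) := by exact_mod_cast (t-i).factorial_pos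
  have f2 : (0:ℝ) < ((i).factorial : ℝ) := by exact_mod_cast (i).factorial_pos
  have c2 : (0:ℝ) < μ + 1/2 + ((t-i : ℕ) : ℝ) := by positivity
  have c3 : (0:ℝ) < μ + 1/2 + (i : ℝ) := by positivity
  have r2' : poch (μ+1/2) (t-i) = (μ+1/2) * poch (μ+1/2+1) (t-i) / (μ+1/2+((t-i:ℕ):ℝ)) := by
    rw [eq_div_iff (ne_of_gt c2)]
    exact r2
  have r3' : poch (μ+1/2) i = (μ+1/2) * poch (μ+1/2+1) i / (μ+1/2+(i:ℝ)) := by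
    rw [eq_div_iff (ne_of_gt c3)]
    exact r3
  rw [div_eq_div_iff (by positivity) (by positivity), r1, h4,
    show (((t+1).factorial : ℕ) : ℝ) = ((t:ℝ)+1) * (t.factorial : ℝ) by
      push_cast [Nat.factorial_succ]; ring,
    ← hch]
  linear_combination
    (-(((t:ℝ)+1) * (t.choose i : ℝ) * (i.factorial : ℝ) * ((t-i).factorial : ℝ) *
        poch (μ+1/2+1) t * 4^(t-i) * 4^i * 4 * (μ+1/2) * poch (μ+1/2+1) i)) * r2
    + (-(((t:ℝ)+1) * (t.choose i : ℝ) * (i.factorial : ℝ) * ((t-i).factorial : ℝ) *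
        poch (μ+1/2+1) t * 4^(t-i) * 4^i * 4 * (μ+1/2+((t-i:ℕ):ℝ)) * poch (μ+1/2) (t-i))) * r3

lemma pMu_one_neg_one (μ : ℝ) (s : ℕ) :
    pMu μ (2*s) 1 (-1)
    = ((∑ k ∈ Finset.range (2*s+1), binomMu μ (2*s) (k : ℤ) * (-1)^k : ℝ) : ℂ) := by
  rw [pMu, Complex.ofReal_sum]
  refine Finset.sum_congr rfl fun k hk => ?_
  have hk' : k ≤ 2*s := Nat.lt_succ_iff.mp (Finset.mem_range.mp hk)
  have h1 : ((-1 : ℂ)) ^ (2*s-k) * (-1)^k = 1 := by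
    rw [← pow_add, Nat.sub_add_cancel hk', pow_mul]
    norm_num
  have h2 : ((-1 : ℂ)) ^ k * (-1)^k = 1 := by
    rw [← pow_add, ← two_mul, pow_mul]
    norm_num
  have h3 : ((-1 : ℂ)) ^ (2*s-k) = (-1)^k := by
    calc ((-1:ℂ))^(2*s-k) = ((-1:ℂ))^(2*s-k) * (((-1:ℂ))^k * (-1)^k) := by rw [h2, mul_one]
      _ = (((-1:ℂ))^(2*s-k) * (-1)^k) * (-1)^k := by ring
      _ = (-1)^k := by rw [h1, one_mul]
  rw [one_pow, mul_one, h3]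
  push_cast
  ring

lemma main_sum (μ : ℝ) (hμ : -(1/2:ℝ) < μ) (s : ℕ) (hs : 1 ≤ s) :
    ∑ k ∈ Finset.range (2*s+1), binomMu μ (2*s) (k : ℤ) * (-1)^k
    = 2*μ * poch (2*μ + s + 1) (s-1) / poch (μ+1/2) s := by
  obtain ⟨t, rfl⟩ : ∃ t, s = t + 1 := ⟨s-1, by omega⟩
  have ha : 0 < μ + 1/2 := by linarith
  have hb : 0 < μ + 1/2 + 1 := by linarith
  rw [sum_split (fun k => binomMu μ (2*(t+1)) (k:ℤ) * (-1)^k) (t+1)]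
  have hE : ∑ i ∈ Finset.range (t+1+1), binomMu μ (2*(t+1)) ((2*i : ℕ) : ℤ) * (-1:ℝ)^(2*i)
      = poch (2*(μ+1/2) + ((t+1 : ℕ) : ℝ) - 1) (t+1) / poch (μ+1/2) (t+1) := by
    rw [← conv_sum (μ+1/2) ha (t+1)]
    refine Finset.sum_congr rfl fun i hi => ?_
    have hi' : i ≤ t+1 := Nat.lt_succ_iff.mp (Finset.mem_range.mp hi)
    have hm1 : (-1:ℝ)^(2*i) = 1 := by rw [pow_mul]; norm_num
    rw [even_term μ hμ (t+1) i hi', hm1, mul_one]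
  have hO : ∑ i ∈ Finset.range (t+1), binomMu μ (2*(t+1)) ((2*i+1 : ℕ) : ℤ) * (-1:ℝ)^(2*i+1)
      = -(((t:ℝ)+1) * (poch (2*(μ+1/2+1) + (t : ℝ) - 1) t / poch (μ+1/2+1) t) / (μ+1/2)) := by
    have hstep : ∑ i ∈ Finset.range (t+1),
          binomMu μ (2*(t+1)) ((2*i+1 : ℕ) : ℤ) * (-1:ℝ)^(2*i+1)
        = ∑ i ∈ Finset.range (t+1), -(((t:ℝ)+1)/(μ+1/2) *
            ((t.choose i : ℝ) * poch (μ+1/2+1) t /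
              (poch (μ+1/2+1) (t-i) * poch (μ+1/2+1) i))) := by
      refine Finset.sum_congr rfl fun i hi => ?_
      have hi' : i ≤ t := Nat.lt_succ_iff.mp (Finset.mem_range.mp hi)
      have hm1 : (-1:ℝ)^(2*i+1) = -1 := by rw [pow_succ, pow_mul]; norm_num
      have x1 : (0:ℝ) < poch (μ+1/2+1) (t-i) := poch_pos hb _
      have x2 : (0:ℝ) < poch (μ+1/2+1) i := poch_pos hb _
      rw [odd_term μ hμ t i hi', hm1]
      field_simp
    rw [hstep, Finset.sum_neg_distrib, ← Finset.mul_sum, conv_sum (μ+1/2+1) hb t]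
    ring
  rw [hE, hO]
  have e1 : poch (2*(μ+1/2) + ((t+1:ℕ):ℝ) - 1) (t+1) = (2*μ+t+1) * poch (2*μ+(t:ℝ)+2) t := by
    rw [show (2*(μ+1/2) + ((t+1:ℕ):ℝ) - 1) = 2*μ+(t:ℝ)+1 by push_cast; ring, poch_succ_left,
      show (2*μ+(t:ℝ)+1+1) = 2*μ+(t:ℝ)+2 by ring]
  have e2 : poch (2*(μ+1/2+1) + (t:ℝ) - 1) t = poch (2*μ+(t:ℝ)+2) t := by
    rw [show (2*(μ+1/2+1) + (t:ℝ) - 1) = 2*μ+(t:ℝ)+2 by ring]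
  have e3 : poch (μ+1/2) (t+1) = (μ+1/2) * poch (μ+1/2+1) t := poch_succ_left _ _
  have q1 : (0:ℝ) < poch (μ+1/2+1) t := poch_pos hb _
  rw [e1, e2, show (t+1) - 1 = t from rfl,
    show (2*μ + ((t+1:ℕ):ℝ) + 1) = 2*μ+(t:ℝ)+2 by push_cast; ring, e3]
  field_simp
  ring

lemma poch_double (b : ℝ) (m : ℕ) :
    poch (2*b) (2*m) = 4^m * (poch b m * poch (b+1/2) m) := by
  induction m with
  | zero => simp [poch]
  | succ m ih =>
    rw [show 2*(m+1) = (2*m)+1+1 by ring, poch_succ_right, poch_succ_right, ih,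
      poch_succ_right, poch_succ_right]
    push_cast
    ring

theorem pMu_four_n_sub_two (μ : ℝ) (hμ : -(1/2 : ℝ) < μ) (n : ℕ) (hn : 1 ≤ n) :
    pMu μ (4 * n - 2) 1 (-1) =
      ((μ * 2 ^ (2 * n - 1) * (∏ k ∈ Finset.Icc (n + 1) (2 * n - 1), (μ + (k : ℝ) - 1)) /
        (∏ k ∈ Finset.Icc 1 n, (μ + (k : ℝ) - 1/2)) : ℝ) : ℂ) := by
  have ha : 0 < μ + 1/2 := by linarith
  have hm : 4*n-2 = 2*(2*n-1) := by omega
  rw [hm, pMu_one_neg_one, main_sum μ hμ (2*n-1) (by omega)]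
  have hc1 : (((2*n-1 : ℕ)) : ℝ) = 2*(n:ℝ)-1 := by
    push_cast [Nat.cast_sub (show 1 ≤ 2*n by omega)]
    ring
  have hreal : 2*μ * poch (2*μ + ((2*n-1 : ℕ) : ℝ) + 1) (2*n-1-1) / poch (μ+1/2) (2*n-1)
      = μ * 2^(2*n-1) * (∏ k ∈ Finset.Icc (n + 1) (2*n-1), (μ + (k : ℝ) - 1)) /
        (∏ k ∈ Finset.Icc 1 n, (μ + (k : ℝ) - 1/2)) := by
    have hP1 : ∏ k ∈ Finset.Icc 1 n, (μ + (k:ℝ) - 1/2) = poch (μ+1/2) n := by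
      rw [← Finset.Ico_add_one_right_eq_Icc, Finset.prod_Ico_eq_prod_range,
        show n+1-1 = n from rfl, poch]
      refine Finset.prod_congr rfl fun i _ => by push_cast; ring
    have hP2 : ∏ k ∈ Finset.Icc (n+1) (2*n-1), (μ + (k:ℝ) - 1) = poch (μ+(n:ℝ)) (n-1) := by
      rw [← Finset.Ico_add_one_right_eq_Icc, Finset.prod_Ico_eq_prod_range,
        show 2*n-1+1-(n+1) = n-1 by omega, poch]
      refine Finset.prod_congr rfl fun i _ => by push_cast; ring
    have hA : poch (2*μ + ((2*n-1 : ℕ) : ℝ) + 1) (2*n-1-1)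
        = 4^(n-1) * (poch (μ+(n:ℝ)) (n-1) * poch (μ+(n:ℝ)+1/2) (n-1)) := by
      rw [show 2*n-1-1 = 2*(n-1) by omega,
        show (2*μ + ((2*n-1 : ℕ) : ℝ) + 1) = 2*(μ+(n:ℝ)) by rw [hc1]; ring,
        poch_double]
    have hB : poch (μ+1/2) (2*n-1) = poch (μ+1/2) n * poch (μ+(n:ℝ)+1/2) (n-1) := by
      rw [show 2*n-1 = n+(n-1) by omega, poch_add,
        show (μ+1/2+(n:ℝ)) = μ+(n:ℝ)+1/2 by ring]
    have h2p : (2:ℝ)^(2*n-1) = 2*4^(n-1) := by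
      rw [show 2*n-1 = 2*(n-1)+1 by omega, pow_succ, pow_mul]
      ring
    have q1 : (0:ℝ) < poch (μ+1/2) n := poch_pos ha _
    have q2 : (0:ℝ) < poch (μ+(n:ℝ)+1/2) (n-1) := poch_pos
      (by have h0 : (0:ℝ) ≤ n := Nat.cast_nonneg n; linarith) _
    rw [hP1, hP2, hA, hB, h2p, div_eq_div_iff (ne_of_gt (mul_pos q1 q2)) (ne_of_gt q1)]
    ring
  exact_mod_cast congrArg Complex.ofReal hreal
end

section
/- If -1/2 < μ < 0, then for every nonzero real x one has |exp_μ(ix)| > 1. -/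
open Finset

lemma gammaMu_pos_s15 {μ : ℝ} (hμ1 : -(1/2 : ℝ) < μ) (n : ℕ) : 0 < gammaMu μ n := by
  induction n with
  | zero => norm_num [gammaMu]
  | succ n ih =>
    rw [gammaMu]
    have h : (0:ℝ) < (n + 1 : ℝ) + 2 * μ * (if Odd (n + 1) then 1 else 0) := by
      split <;> [nlinarith [Nat.cast_nonneg (α := ℝ) n]; nlinarith [Nat.cast_nonneg (α := ℝ) n]]
    exact mul_pos h ih

lemma gammaMu_ge {μ : ℝ} (hμ1 : -(1/2 : ℝ) < μ) (hμ2 : μ < 0) (n : ℕ) :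
    (1 + 2*μ)^n * n.factorial ≤ gammaMu μ n := by
  induction n with
  | zero => norm_num [gammaMu]
  | succ n ih =>
    rw [gammaMu, pow_succ, Nat.factorial_succ]
    have h1 : (1 + 2*μ) * ((n:ℝ) + 1) ≤ (n + 1 : ℝ) + 2 * μ * (if Odd (n + 1) then 1 else 0) := by
      split <;> nlinarith [Nat.cast_nonneg (α := ℝ) n]
    have h2 : (0:ℝ) < 1 + 2*μ := by linarith
    have h3 := gammaMu_pos_s15 hμ1 n
    have h4 : (0:ℝ) ≤ (1 + 2*μ)^n * n.factorial := by positivity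
    calc (1 + 2*μ)^n * (1+2*μ) * ((n+1) * n.factorial : ℕ)
        = ((1+2*μ) * ((n:ℝ)+1)) * ((1 + 2*μ)^n * n.factorial) := by push_cast; ring
      _ ≤ ((n + 1 : ℝ) + 2 * μ * (if Odd (n + 1) then 1 else 0)) * gammaMu μ n := by
          apply mul_le_mul h1 ih h4
          split <;> nlinarith [Nat.cast_nonneg (α := ℝ) n]

noncomputable def aCoef (μ : ℝ) (n : ℕ) : ℂ := Complex.I ^ n / (gammaMu μ n : ℂ)

lemma summable_of_bound {b : ℕ → ℂ} (C r : ℝ) (hb : ∀ n, ‖b n‖ ≤ C * r^n / n.factorial) :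
    Summable b := by
  apply Summable.of_norm_bounded (((Real.summable_pow_div_factorial r).mul_left C).congr ?_) hb
  intro n; rw [mul_div_assoc]

lemma norm_aCoef_le {μ : ℝ} (hμ1 : -(1/2 : ℝ) < μ) (hμ2 : μ < 0) (n : ℕ) :
    ‖aCoef μ n‖ ≤ (1 + 2*μ)⁻¹^n / n.factorial := by
  have h2 : (0:ℝ) < 1 + 2*μ := by linarith
  have hg := gammaMu_pos_s15 hμ1 n
  have hge := gammaMu_ge hμ1 hμ2 n
  have hfac : (0:ℝ) < n.factorial := by positivity
  rw [aCoef, norm_div, norm_pow, Complex.norm_I, one_pow,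
    Complex.norm_real, Real.norm_eq_abs, abs_of_pos hg]
  rw [div_le_div_iff₀ hg hfac]
  calc (1:ℝ) * n.factorial = (1+2*μ)⁻¹^n * ((1+2*μ)^n * n.factorial) := by
        rw [inv_pow]; field_simp
    _ ≤ (1+2*μ)⁻¹^n * gammaMu μ n := mul_le_mul_of_nonneg_left hge (by positivity)

lemma norm_term_le {μ : ℝ} (hμ1 : -(1/2 : ℝ) < μ) (hμ2 : μ < 0) (n : ℕ) (x : ℝ) :
    ‖aCoef μ n * (x:ℂ)^n‖ ≤ ((1 + 2*μ)⁻¹ * |x|)^n / n.factorial := by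
  rw [norm_mul, norm_pow, Complex.norm_real, Real.norm_eq_abs]
  calc ‖aCoef μ n‖ * |x|^n ≤ ((1 + 2*μ)⁻¹^n / n.factorial) * |x|^n := by
        apply mul_le_mul_of_nonneg_right (norm_aCoef_le hμ1 hμ2 n) (by positivity)
    _ = ((1 + 2*μ)⁻¹ * |x|)^n / n.factorial := by rw [mul_pow]; ring

lemma summable_term {μ : ℝ} (hμ1 : -(1/2 : ℝ) < μ) (hμ2 : μ < 0) (x : ℝ) :
    Summable (fun n => aCoef μ n * (x:ℂ)^n) := by
  apply summable_of_bound 1 ((1 + 2*μ)⁻¹ * |x|)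
  intro n; rw [one_mul]; exact norm_term_le hμ1 hμ2 n x

noncomputable def fMu (μ : ℝ) (t : ℝ) : ℂ := ∑' n, aCoef μ n * (t:ℂ)^n

noncomputable def dMu (μ : ℝ) (t : ℝ) : ℂ := ∑' n : ℕ, ((n:ℂ)+1) * aCoef μ (n+1) * (t:ℂ)^n

lemma summable_dterm {μ : ℝ} (hμ1 : -(1/2 : ℝ) < μ) (hμ2 : μ < 0) (x : ℝ) :
    Summable (fun n : ℕ => ((n:ℂ)+1) * aCoef μ (n+1) * (x:ℂ)^n) := by
  have h2 : (0:ℝ) < 1 + 2*μ := by linarith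
  set q := (1 + 2*μ)⁻¹ with hq
  have hq0 : 0 < q := by positivity
  apply summable_of_bound q (q * |x|)
  intro n
  have h1 : ‖aCoef μ (n+1)‖ ≤ q^(n+1) / (n+1).factorial := norm_aCoef_le hμ1 hμ2 (n+1)
  have : ‖((n:ℂ)+1) * aCoef μ (n+1) * (x:ℂ)^n‖ = ((n:ℝ)+1) * ‖aCoef μ (n+1)‖ * |x|^n := by
    rw [norm_mul, norm_mul, norm_pow, Complex.norm_real, Real.norm_eq_abs,
      show ((n:ℂ)+1) = ((n+1 : ℕ) : ℂ) by push_cast; ring, Complex.norm_natCast]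
    push_cast; ring
  rw [this]
  have key : ((n:ℝ)+1) * (q^(n+1) / (n+1).factorial) * |x|^n = q * (q*|x|)^n / n.factorial := by
    rw [Nat.factorial_succ, pow_succ, mul_pow]
    push_cast
    field_simp
  calc ((n:ℝ)+1) * ‖aCoef μ (n+1)‖ * |x|^n
      ≤ ((n:ℝ)+1) * (q^(n+1) / (n+1).factorial) * |x|^n := by
        apply mul_le_mul_of_nonneg_right _ (by positivity)
        exact mul_le_mul_of_nonneg_left h1 (by positivity)
    _ = q * (q*|x|)^n / n.factorial := key

lemma hasDerivAt_fMu {μ : ℝ} (hμ1 : -(1/2 : ℝ) < μ) (hμ2 : μ < 0) (x : ℝ) :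
    HasDerivAt (fMu μ) (dMu μ x) x := by
  have h2 : (0:ℝ) < 1 + 2*μ := by linarith
  set q := (1 + 2*μ)⁻¹ with hq
  have hq0 : 0 < q := by positivity
  set R := |x| + 1 with hR
  have hR0 : 0 < R := by positivity
  set u : ℕ → ℝ := fun n => q^n / n.factorial * (n * R^(n-1)) with hu_def
  have hu : Summable u := by
    rw [← summable_nat_add_iff 1]
    apply Summable.congr ((Real.summable_pow_div_factorial (q*R)).mul_left q)
    intro n
    simp only [hu_def]
    rw [Nat.factorial_succ, Nat.add_sub_cancel, pow_succ, mul_pow]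
    push_cast
    field_simp
  set g : ℕ → ℝ → ℂ := fun n t => aCoef μ n * (t:ℂ)^n with hg_def
  set g' : ℕ → ℝ → ℂ := fun n t => aCoef μ n * (n * (t:ℂ)^(n-1)) with hg'_def
  have hg : ∀ (n : ℕ) (y : ℝ), y ∈ Metric.ball (0:ℝ) R → HasDerivAt (g n) (g' n y) y := by
    intro n y _
    exact ((hasDerivAt_pow n ((y:ℝ):ℂ)).comp_ofReal).const_mul (aCoef μ n)
  have hbound : ∀ (n : ℕ) (y : ℝ), y ∈ Metric.ball (0:ℝ) R → ‖g' n y‖ ≤ u n := by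
    intro n y hy
    have hyR : |y| < R := by simpa [Real.dist_eq] using hy
    simp only [hg'_def, hu_def]
    rw [norm_mul, norm_mul, norm_pow, Complex.norm_real, Real.norm_eq_abs, Complex.norm_natCast]
    have h1 : ‖aCoef μ n‖ ≤ q^n / n.factorial := norm_aCoef_le hμ1 hμ2 n
    have h3 : |y|^(n-1) ≤ R^(n-1) := pow_le_pow_left₀ (abs_nonneg y) hyR.le _
    have h4 : (0:ℝ) ≤ (n:ℝ) := Nat.cast_nonneg n
    calc ‖aCoef μ n‖ * ((n:ℝ) * |y|^(n-1)) ≤ (q^n / n.factorial) * ((n:ℝ) * R^(n-1)) := by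
          apply mul_le_mul h1 _ (by positivity) (by positivity)
          exact mul_le_mul_of_nonneg_left h3 h4
      _ = _ := rfl
  have hxmem : x ∈ Metric.ball (0:ℝ) R := by
    simp [Real.dist_eq, hR]
  have hsum0 : Summable (fun n => g n x) := summable_term hμ1 hμ2 x
  have hd := hasDerivAt_tsum_of_isPreconnected hu Metric.isOpen_ball
    (convex_ball (0:ℝ) R).isPreconnected hg hbound hxmem hsum0 hxmem
  have hsumd : Summable (fun n => g' n x) :=
    Summable.of_norm_bounded hu (fun n => hbound n x hxmem)
  have heq : ∑' n, g' n x = dMu μ x := by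
    rw [Summable.tsum_eq_zero_add hsumd]
    have h0 : g' 0 x = 0 := by simp [hg'_def]
    rw [h0, zero_add, dMu]
    apply tsum_congr
    intro n
    simp only [hg'_def, Nat.add_sub_cancel]
    push_cast
    ring
  rw [heq] at hd
  exact hd

lemma fMu_zero (μ : ℝ) : fMu μ 0 = 1 := by
  rw [fMu]
  rw [tsum_eq_single 0 (by intro n hn; simp [zero_pow hn])]
  simp [aCoef, gammaMu]

lemma fMu_neg {μ : ℝ} (hμ1 : -(1/2 : ℝ) < μ) (hμ2 : μ < 0) (x : ℝ) :
    fMu μ (-x) = (starRingEnd ℂ) (fMu μ x) := by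
  rw [fMu, fMu]
  have hst : (starRingEnd ℂ) (∑' (n:ℕ), aCoef μ n * (x:ℂ)^n) = ∑' (n:ℕ), star (aCoef μ n * (x:ℂ)^n) :=
    tsum_star
  rw [hst]
  apply tsum_congr
  intro n
  simp only [star_mul', star_pow, Complex.star_def, Complex.conj_ofReal, aCoef, map_div₀,
    map_pow, Complex.conj_I]
  push_cast
  rw [neg_pow, show (-Complex.I)^n = (-1)^n * Complex.I^n by rw [neg_pow]]
  ring

lemma aCoef_rec {μ : ℝ} (hμ1 : -(1/2 : ℝ) < μ) (n : ℕ) :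
    ((n:ℂ) + 1 + 2*μ*(if Odd (n+1) then 1 else 0)) * aCoef μ (n+1) = Complex.I * aCoef μ n := by
  have hg0 : (gammaMu μ n : ℝ) ≠ 0 := (gammaMu_pos_s15 hμ1 n).ne'
  have hc : (0:ℝ) < (n + 1 : ℝ) + 2 * μ * (if Odd (n + 1) then 1 else 0) := by
    split <;> nlinarith [Nat.cast_nonneg (α := ℝ) n]
  have hg0c : (gammaMu μ n : ℂ) ≠ 0 := Complex.ofReal_ne_zero.mpr hg0
  have hgs : gammaMu μ (n+1) = ((n + 1 : ℝ) + 2 * μ * (if Odd (n + 1) then 1 else 0)) * gammaMu μ n := rfl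
  by_cases hodd : Odd (n+1)
  · have h1 : ((n:ℝ) + 1 + 2*μ) ≠ 0 := by
      have := hc; rw [if_pos hodd] at this; intro hcon; rw [← hcon] at this; linarith
    have h1c : ((n:ℂ) + 1 + 2*μ) ≠ 0 := by
      rw [show ((n:ℂ) + 1 + 2*μ) = (((n:ℝ) + 1 + 2*μ : ℝ) : ℂ) by push_cast; ring]
      exact Complex.ofReal_ne_zero.mpr h1
    rw [if_pos hodd, aCoef, aCoef, hgs, if_pos hodd, pow_succ]
    push_cast
    field_simp
  · rw [if_neg hodd, aCoef, aCoef, hgs, if_neg hodd, pow_succ]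
    have h1 : ((n:ℝ) + 1) ≠ 0 := by positivity
    have h1c : ((n:ℂ) + 1) ≠ 0 := by
      rw [show ((n:ℂ) + 1) = (((n:ℝ) + 1 : ℝ) : ℂ) by push_cast; ring]
      exact Complex.ofReal_ne_zero.mpr h1
    push_cast
    field_simp

lemma key_ode {μ : ℝ} (hμ1 : -(1/2 : ℝ) < μ) (hμ2 : μ < 0) (x : ℝ) :
    (x:ℂ) * dMu μ x + μ * (fMu μ x - fMu μ (-x)) = Complex.I * x * fMu μ x := by
  have hsx := summable_term hμ1 hμ2 x
  have hsnx := summable_term hμ1 hμ2 (-x)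
  set h : ℕ → ℂ := fun n => if Odd n then 2*(μ:ℂ)*aCoef μ n*(x:ℂ)^n else 0 with hh
  have hterm : ∀ n, (μ:ℂ) * (aCoef μ n * (x:ℂ)^n - aCoef μ n * ((-x:ℝ):ℂ)^n) = h n := by
    intro n
    simp only [hh]
    push_cast
    rcases Nat.even_or_odd n with he | ho
    · rw [he.neg_pow, if_neg (by simpa using he)]
      ring
    · rw [ho.neg_pow, if_pos ho]
      ring
  have step1 : μ * (fMu μ x - fMu μ (-x)) = ∑' n, h n := by
    rw [fMu, fMu, ← Summable.tsum_sub hsx hsnx, ← tsum_mul_left]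
    exact tsum_congr hterm
  have hSumh : Summable h :=
    (((hsx.sub hsnx).mul_left (μ:ℂ)).congr hterm)
  have step2 : ∑' n, h n = ∑' n, h (n+1) := by
    rw [Summable.tsum_eq_zero_add hSumh]
    simp [hh]
  have hdx : Summable (fun n : ℕ => (x:ℂ) * (((n:ℂ)+1) * aCoef μ (n+1) * (x:ℂ)^n)) :=
    (summable_dterm hμ1 hμ2 x).mul_left _
  have hSh : Summable (fun n => h (n+1)) := (summable_nat_add_iff 1).mpr hSumh
  have step3 : (x:ℂ) * dMu μ x = ∑' n : ℕ, (x:ℂ) * (((n:ℂ)+1) * aCoef μ (n+1) * (x:ℂ)^n) := by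
    rw [dMu, tsum_mul_left]
  rw [step3, step1, step2, ← Summable.tsum_add hdx hSh]
  have step4 : ∀ n : ℕ, (x:ℂ) * (((n:ℂ)+1) * aCoef μ (n+1) * (x:ℂ)^n) + h (n+1)
      = Complex.I * x * (aCoef μ n * (x:ℂ)^n) := by
    intro n
    have hrec := aCoef_rec hμ1 n
    simp only [hh]
    split_ifs with hodd
    · have : ((n:ℂ) + 1 + 2*μ) * aCoef μ (n+1) = Complex.I * aCoef μ n := by
        rw [← hrec, if_pos hodd]; ring
      calc (x:ℂ) * (((n:ℂ)+1) * aCoef μ (n+1) * (x:ℂ)^n) + 2*(μ:ℂ)*aCoef μ (n+1)*(x:ℂ)^(n+1)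
          = (((n:ℂ) + 1 + 2*μ) * aCoef μ (n+1)) * (x:ℂ)^(n+1) := by rw [pow_succ]; ring
        _ = Complex.I * x * (aCoef μ n * (x:ℂ)^n) := by rw [this, pow_succ]; ring
    · have : ((n:ℂ) + 1) * aCoef μ (n+1) = Complex.I * aCoef μ n := by
        rw [← hrec, if_neg hodd]; ring
      calc (x:ℂ) * (((n:ℂ)+1) * aCoef μ (n+1) * (x:ℂ)^n) + 0
          = (((n:ℂ) + 1) * aCoef μ (n+1)) * (x:ℂ)^(n+1) := by rw [pow_succ]; ring
        _ = Complex.I * x * (aCoef μ n * (x:ℂ)^n) := by rw [this, pow_succ]; ring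
  rw [tsum_congr step4, tsum_mul_left, ← fMu]

lemma dMu_spec {μ : ℝ} (hμ1 : -(1/2 : ℝ) < μ) (hμ2 : μ < 0) {x : ℝ} (hx : x ≠ 0) :
    (dMu μ x).re = -(fMu μ x).im ∧ (dMu μ x).im = (fMu μ x).re - 2*μ*(fMu μ x).im/x := by
  have E := key_ode hμ1 hμ2 x
  rw [fMu_neg hμ1 hμ2 x, Complex.sub_conj] at E
  have Ere := congrArg Complex.re E
  have Eim := congrArg Complex.im E
  simp only [Complex.add_re, Complex.add_im, Complex.mul_re, Complex.mul_im, Complex.I_re,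
    Complex.I_im, Complex.ofReal_re, Complex.ofReal_im] at Ere Eim
  constructor
  · have : x * (dMu μ x).re = x * (-(fMu μ x).im) := by linarith
    exact mul_left_cancel₀ hx this
  · have : x * (dMu μ x).im = x * ((fMu μ x).re - 2*μ*(fMu μ x).im/x) := by
      field_simp
      linarith
    exact mul_left_cancel₀ hx this

noncomputable def gFun (μ : ℝ) (t : ℝ) : ℝ := (fMu μ t).re^2 + (fMu μ t).im^2

lemma hasDerivAt_gFun {μ : ℝ} (hμ1 : -(1/2 : ℝ) < μ) (hμ2 : μ < 0) (x : ℝ) :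
    HasDerivAt (gFun μ)
      (2*(fMu μ x).re*(dMu μ x).re + 2*(fMu μ x).im*(dMu μ x).im) x := by
  have hf := hasDerivAt_fMu hμ1 hμ2 x
  have hre : HasDerivAt (fun t => (fMu μ t).re) ((dMu μ x).re) x :=
    Complex.reCLM.hasFDerivAt.comp_hasDerivAt x hf
  have him : HasDerivAt (fun t => (fMu μ t).im) ((dMu μ x).im) x :=
    Complex.imCLM.hasFDerivAt.comp_hasDerivAt x hf
  have := (hre.pow 2).add (him.pow 2)
  exact this.congr_deriv (by push_cast; ring)

lemma hasDerivAt_gFun' {μ : ℝ} (hμ1 : -(1/2 : ℝ) < μ) (hμ2 : μ < 0) {x : ℝ} (hx : x ≠ 0) :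
    HasDerivAt (gFun μ) (-(4*μ/x)*(fMu μ x).im^2) x := by
  obtain ⟨h1, h2⟩ := dMu_spec hμ1 hμ2 hx
  have h := hasDerivAt_gFun hμ1 hμ2 x
  convert h using 1
  rw [h1, h2]
  field_simp
  ring

lemma gFun_zero (μ : ℝ) : gFun μ 0 = 1 := by
  rw [gFun, fMu_zero]; norm_num

lemma gFun_neg {μ : ℝ} (hμ1 : -(1/2 : ℝ) < μ) (hμ2 : μ < 0) (x : ℝ) :
    gFun μ (-x) = gFun μ x := by
  rw [gFun, gFun, fMu_neg hμ1 hμ2 x]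
  simp [Complex.conj_re, Complex.conj_im]

lemma dMu_zero_im {μ : ℝ} (hμ1 : -(1/2 : ℝ) < μ) : (dMu μ 0).im = (gammaMu μ 1)⁻¹ := by
  have : dMu μ 0 = aCoef μ 1 := by
    rw [dMu]
    rw [tsum_eq_single 0 (by intro n hn; simp [zero_pow hn])]
    norm_num
  rw [this, aCoef, pow_one]
  rw [div_eq_mul_inv, ← Complex.ofReal_inv, mul_comm]
  simp

lemma gFun_gt_one {μ : ℝ} (hμ1 : -(1/2 : ℝ) < μ) (hμ2 : μ < 0) {x : ℝ} (hx : 0 < x) :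
    1 < gFun μ x := by
  have hdiff : ∀ t : ℝ, DifferentiableAt ℝ (gFun μ) t :=
    fun t => (hasDerivAt_gFun hμ1 hμ2 t).differentiableAt
  have hmono : MonotoneOn (gFun μ) (Set.Icc 0 x) := by
    apply monotoneOn_of_deriv_nonneg (convex_Icc 0 x)
      (fun t _ => (hdiff t).continuousAt.continuousWithinAt)
      (fun t _ => (hdiff t).differentiableWithinAt)
    intro t ht
    rw [interior_Icc] at ht
    rw [(hasDerivAt_gFun' hμ1 hμ2 (ne_of_gt ht.1)).deriv]
    have h1 : 0 ≤ -(4*μ/t) := by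
      have : 4*μ/t ≤ 0 := div_nonpos_of_nonpos_of_nonneg (by linarith) ht.1.le
      linarith
    exact mul_nonneg h1 (sq_nonneg _)
  have him : HasDerivAt (fun t => (fMu μ t).im) ((dMu μ 0).im) 0 :=
    Complex.imCLM.hasFDerivAt.comp_hasDerivAt 0 (hasDerivAt_fMu hμ1 hμ2 0)
  have hpos : 0 < (dMu μ 0).im := by
    rw [dMu_zero_im hμ1]
    have := gammaMu_pos_s15 hμ1 1
    positivity
  rw [hasDerivAt_iff_tendsto_slope] at him
  have him' := him.mono_left (nhdsWithin_mono (0:ℝ)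
    (show Set.Ioi (0:ℝ) ⊆ {(0:ℝ)}ᶜ from fun y hy => Set.mem_compl_singleton_iff.mpr (ne_of_gt hy)))
  have hev1 := him'.eventually (eventually_gt_nhds hpos)
  have hev2 : ∀ᶠ t in nhdsWithin (0:ℝ) (Set.Ioi 0), t ∈ Set.Ioo 0 x :=
    Filter.eventually_iff.mpr (by exact Ioo_mem_nhdsGT_of_mem ⟨le_refl (0:ℝ), hx⟩)
  obtain ⟨t₀, hslope, ht₀⟩ := (hev1.and hev2).exists
  have hfim : 0 < (fMu μ t₀).im := by
    rw [slope_def_field] at hslope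
    have h0 : (fMu μ 0).im = 0 := by rw [fMu_zero]; simp
    rw [h0, sub_zero, sub_zero] at hslope
    rcases div_pos_iff.mp hslope with ⟨h, _⟩ | ⟨_, h⟩
    · exact h
    · linarith [ht₀.1]
  have hg := hasDerivAt_gFun' hμ1 hμ2 (ne_of_gt ht₀.1)
  have hgpos : 0 < -(4*μ/t₀)*(fMu μ t₀).im^2 := by
    apply mul_pos _ (pow_pos hfim 2)
    have : 4*μ/t₀ < 0 := div_neg_of_neg_of_pos (by linarith) ht₀.1
    linarith
  rw [hasDerivAt_iff_tendsto_slope] at hg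
  have hg' := hg.mono_left (nhdsWithin_mono t₀
    (show Set.Ioi t₀ ⊆ {t₀}ᶜ from fun y hy => Set.mem_compl_singleton_iff.mpr (ne_of_gt hy)))
  have hev3 := hg'.eventually (eventually_gt_nhds hgpos)
  have hev4 : ∀ᶠ t in nhdsWithin t₀ (Set.Ioi t₀), t ∈ Set.Ioo t₀ x :=
    Filter.eventually_iff.mpr (by exact Ioo_mem_nhdsGT_of_mem ⟨le_refl t₀, ht₀.2⟩)
  obtain ⟨u, hslopeu, hu⟩ := (hev3.and hev4).exists
  have hgu : gFun μ t₀ < gFun μ u := by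
    rw [slope_def_field] at hslopeu
    rcases div_pos_iff.mp hslopeu with ⟨h, _⟩ | ⟨_, h⟩
    · linarith
    · linarith [hu.1]
  have h1 : gFun μ 0 ≤ gFun μ t₀ :=
    hmono ⟨le_refl 0, hx.le⟩ ⟨ht₀.1.le, ht₀.2.le⟩ ht₀.1.le
  have h2 : gFun μ u ≤ gFun μ x :=
    hmono ⟨(ht₀.1.trans hu.1).le, hu.2.le⟩ ⟨hx.le, le_refl x⟩ hu.2.le
  rw [gFun_zero] at h1
  linarith

theorem abs_expMu_gt_one (μ : ℝ) (hμ1 : -(1/2 : ℝ) < μ) (hμ2 : μ < 0) (x : ℝ) (hx : x ≠ 0) :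
    1 < ‖expMu μ (Complex.I * x)‖ := by
  have hexp : expMu μ (Complex.I * x) = fMu μ x := by
    rw [expMu, fMu]
    apply tsum_congr
    intro n
    rw [aCoef, mul_pow]
    ring
  rw [hexp]
  have hgx : 1 < gFun μ x := by
    rcases lt_or_gt_of_ne hx with h | h
    · rw [← gFun_neg hμ1 hμ2 x]
      exact gFun_gt_one hμ1 hμ2 (by linarith)
    · exact gFun_gt_one hμ1 hμ2 h
  have habs : ‖fMu μ x‖ ^ 2 = gFun μ x := by
    rw [Complex.sq_norm, Complex.normSq_apply, gFun]
    ring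
  nlinarith [norm_nonneg (fMu μ x)]
end
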